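/- Theorem 2 (two general sub-collections, first bound). Let α_R, R ∈ ℛ, be strictly positive kernels on a finite set X, and ℛ_1, ℛ_2 ⊆ ℛ. Let q_i be the normalized product over ℛ_i and q̄_i the normalized product over ℛ\ℛ_i (i = 1,2), and ℒ_{q_i} = ln Z_i + Σ_{R∈ℛ\ℛ_i} Σ_x q_i(x) ln α_R(x). If H(q_1) ≤ H(q_2), then ℒ_{q_2} ≤ ℒ_{q_1} + D(q_1‖q̄_1) − D(q_2‖q_1). -/

import Mathlib

open Finset Real

/-- Theorem 2, first bound: if `H(q1) ≤ H(q2)` then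
`ℒ_{q2} ≤ ℒ_{q1} + D(q1‖q̄1) − D(q2‖q1)`. -/
theorem theorem2_first_bound {X : Type*} [Fintype X] [Nonempty X]
    {R : Type*} [Fintype R] [DecidableEq R] (α : R → X → ℝ) (hα : ∀ r x, 0 < α r x)
    (T1 T2 : Finset R) (Z1 Z2 Z1bar : ℝ) (q1 q2 q1bar : X → ℝ)
    (hZ1 : Z1 = ∑ x, ∏ r ∈ T1, α r x)
    (hZ2 : Z2 = ∑ x, ∏ r ∈ T2, α r x)
    (hZ1bar : Z1bar = ∑ x, ∏ r ∈ T1ᶜ, α r x)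
    (hq1 : ∀ x, q1 x = (∏ r ∈ T1, α r x) / Z1)
    (hq2 : ∀ x, q2 x = (∏ r ∈ T2, α r x) / Z2)
    (hq1bar : ∀ x, q1bar x = (∏ r ∈ T1ᶜ, α r x) / Z1bar)
    (hH : (-∑ x, q1 x * Real.log (q1 x)) ≤ -∑ x, q2 x * Real.log (q2 x)) :
    Real.log Z2 + ∑ r ∈ T2ᶜ, ∑ x, q2 x * Real.log (α r x)
      ≤ (Real.log Z1 + ∑ r ∈ T1ᶜ, ∑ x, q1 x * Real.log (α r x))
        + (∑ x, q1 x * Real.log (q1 x / q1bar x))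
        - ∑ x, q2 x * Real.log (q2 x / q1 x) := by
  have hP1 : ∀ x, 0 < ∏ r ∈ T1, α r x := fun x => Finset.prod_pos fun r _ => hα r x
  have hP2 : ∀ x, 0 < ∏ r ∈ T2, α r x := fun x => Finset.prod_pos fun r _ => hα r x
  have hP1b : ∀ x, 0 < ∏ r ∈ T1ᶜ, α r x := fun x => Finset.prod_pos fun r _ => hα r x
  have hZ1pos : 0 < Z1 := hZ1 ▸ Finset.sum_pos (fun x _ => hP1 x) Finset.univ_nonempty
  have hZ2pos : 0 < Z2 := hZ2 ▸ Finset.sum_pos (fun x _ => hP2 x) Finset.univ_nonempty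
  have hZ1bpos : 0 < Z1bar := hZ1bar ▸ Finset.sum_pos (fun x _ => hP1b x) Finset.univ_nonempty
  have hq1pos : ∀ x, 0 < q1 x := fun x => by rw [hq1]; exact div_pos (hP1 x) hZ1pos
  have hq2pos : ∀ x, 0 < q2 x := fun x => by rw [hq2]; exact div_pos (hP2 x) hZ2pos
  have hq1bpos : ∀ x, 0 < q1bar x := fun x => by rw [hq1bar]; exact div_pos (hP1b x) hZ1bpos
  have hq1sum : ∑ x, q1 x = 1 := by
    simp only [hq1]; rw [← Finset.sum_div, ← hZ1, div_self hZ1pos.ne']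
  have hq2sum : ∑ x, q2 x = 1 := by
    simp only [hq2]; rw [← Finset.sum_div, ← hZ2, div_self hZ2pos.ne']
  have hq1bsum : ∑ x, q1bar x = 1 := by
    simp only [hq1bar]; rw [← Finset.sum_div, ← hZ1bar, div_self hZ1bpos.ne']
  -- log formulas
  have hlq1 : ∀ x, Real.log (q1 x) = (∑ r ∈ T1, Real.log (α r x)) - Real.log Z1 := fun x => by
    rw [hq1, Real.log_div (hP1 x).ne' hZ1pos.ne',
      Real.log_prod (fun r _ => (hα r x).ne')]
  have hlq2 : ∀ x, Real.log (q2 x) = (∑ r ∈ T2, Real.log (α r x)) - Real.log Z2 := fun x => by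
    rw [hq2, Real.log_div (hP2 x).ne' hZ2pos.ne',
      Real.log_prod (fun r _ => (hα r x).ne')]
  have hlq1b : ∀ x, Real.log (q1bar x) = (∑ r ∈ T1ᶜ, Real.log (α r x)) - Real.log Z1bar :=
    fun x => by
    rw [hq1bar, Real.log_div (hP1b x).ne' hZ1bpos.ne',
      Real.log_prod (fun r _ => (hα r x).ne')]
  set A : X → ℝ := fun x => ∑ r, Real.log (α r x) with hA
  have hcomp : ∀ (T : Finset R) (x : X),
      (∑ r ∈ Tᶜ, Real.log (α r x)) = A x - ∑ r ∈ T, Real.log (α r x) := fun T x => by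
    rw [hA, eq_sub_iff_add_eq, Finset.sum_compl_add_sum]
  -- rewrite the double sums
  have hD2 : ∑ r ∈ T2ᶜ, ∑ x, q2 x * Real.log (α r x)
      = (∑ x, q2 x * A x) - (∑ x, q2 x * Real.log (q2 x)) - Real.log Z2 := by
    rw [Finset.sum_comm]
    have : ∀ x, ∑ r ∈ T2ᶜ, q2 x * Real.log (α r x)
        = q2 x * A x - q2 x * Real.log (q2 x) - q2 x * Real.log Z2 := fun x => by
      rw [← Finset.mul_sum, hcomp T2 x, hlq2 x]; ring
    rw [Finset.sum_congr rfl fun x _ => this x]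
    rw [Finset.sum_sub_distrib, Finset.sum_sub_distrib, ← Finset.sum_mul, hq2sum, one_mul]
  have hD1 : ∑ r ∈ T1ᶜ, ∑ x, q1 x * Real.log (α r x)
      = (∑ x, q1 x * Real.log (q1bar x)) + Real.log Z1bar := by
    rw [Finset.sum_comm]
    have : ∀ x, ∑ r ∈ T1ᶜ, q1 x * Real.log (α r x)
        = q1 x * Real.log (q1bar x) + q1 x * Real.log Z1bar := fun x => by
      rw [← Finset.mul_sum, hlq1b x]; ring
    rw [Finset.sum_congr rfl fun x _ => this x]
    rw [Finset.sum_add_distrib, ← Finset.sum_mul, hq1sum, one_mul]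
  have hE3 : ∑ x, q1 x * Real.log (q1 x / q1bar x)
      = (∑ x, q1 x * Real.log (q1 x)) - ∑ x, q1 x * Real.log (q1bar x) := by
    rw [← Finset.sum_sub_distrib]
    exact Finset.sum_congr rfl fun x _ => by
      rw [Real.log_div (hq1pos x).ne' (hq1bpos x).ne']; ring
  have hE4 : ∑ x, q2 x * Real.log (q2 x / q1 x)
      = (∑ x, q2 x * Real.log (q2 x)) - ∑ x, q2 x * Real.log (q1 x) := by
    rw [← Finset.sum_sub_distrib]
    exact Finset.sum_congr rfl fun x _ => by
      rw [Real.log_div (hq2pos x).ne' (hq1pos x).ne']; ring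
  -- E5 : ∑ q2 log q1 = ∑ q2 A − ∑ q2 log q1bar − log Z1 − log Z1bar
  have hE5 : ∑ x, q2 x * Real.log (q1 x)
      = (∑ x, q2 x * A x) - (∑ x, q2 x * Real.log (q1bar x))
        - Real.log Z1 - Real.log Z1bar := by
    have : ∀ x, q2 x * Real.log (q1 x)
        = q2 x * A x - q2 x * Real.log (q1bar x)
          - q2 x * Real.log Z1 - q2 x * Real.log Z1bar := fun x => by
      have h1 := hlq1 x
      have h2 := hlq1b x
      have h3 := hcomp T1 x
      have : Real.log (q1 x) = A x - Real.log (q1bar x) - Real.log Z1 - Real.log Z1bar := by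
        rw [h1, h2, h3]; ring
      rw [this]; ring
    rw [Finset.sum_congr rfl fun x _ => this x]
    rw [Finset.sum_sub_distrib, Finset.sum_sub_distrib, Finset.sum_sub_distrib,
      ← Finset.sum_mul, ← Finset.sum_mul, hq2sum, one_mul, one_mul]
  -- Gibbs inequality: ∑ q2 log q1bar ≤ ∑ q2 log q2
  have hGibbs : ∑ x, q2 x * Real.log (q1bar x) ≤ ∑ x, q2 x * Real.log (q2 x) := by
    have key : ∑ x, q2 x * (Real.log (q1bar x) - Real.log (q2 x)) ≤ 0 := by
      calc ∑ x, q2 x * (Real.log (q1bar x) - Real.log (q2 x))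
          = ∑ x, q2 x * Real.log (q1bar x / q2 x) := by
            exact Finset.sum_congr rfl fun x _ => by
              rw [Real.log_div (hq1bpos x).ne' (hq2pos x).ne']
        _ ≤ ∑ x, q2 x * (q1bar x / q2 x - 1) := by
            refine Finset.sum_le_sum fun x _ => ?_
            exact mul_le_mul_of_nonneg_left
              (Real.log_le_sub_one_of_pos (div_pos (hq1bpos x) (hq2pos x)))
              (hq2pos x).le
        _ = ∑ x, (q1bar x - q2 x) := by
            refine Finset.sum_congr rfl fun x _ => ?_
            rw [mul_sub, mul_div_cancel₀ _ (hq2pos x).ne', mul_one]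
        _ = 0 := by rw [Finset.sum_sub_distrib, hq1bsum, hq2sum]; ring
    have := key
    rw [Finset.sum_congr rfl (fun x _ => mul_sub (q2 x) (Real.log (q1bar x)) (Real.log (q2 x))),
      Finset.sum_sub_distrib] at this
    linarith
  rw [hD2, hD1, hE3, hE4, hE5]
  linarith
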